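/- Let s₁ = 1, s₂ = 2, c = 1/4, α = (1), β = (1/2, 1/2), A⁰ = (1/2) (a 1×1 matrix), B⁰ the 1×2 matrix (1/4, 1/4), A¹ the 2×1 matrix with entries (1/2; 1/2), B¹ the 2×2 matrix with all entries equal to 1/4, and B̂¹ the 2×2 matrix with rows (1/4, (3+2√3)/12) and ((3−2√3)/12, 1/4). Then these coefficients satisfy all of the reduced Stratonovich order conditions (1)–(26) with c = 1/4. -/
import Mathlib


open Matrix

theorem stmt9
    (c : ℝ) (α : Fin 1 → ℝ) (β : Fin 2 → ℝ)
    (A0 : Matrix (Fin 1) (Fin 1) ℝ) (B0 : Matrix (Fin 1) (Fin 2) ℝ)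
    (A1 : Matrix (Fin 2) (Fin 1) ℝ) (B1 : Matrix (Fin 2) (Fin 2) ℝ)
    (Bh : Matrix (Fin 2) (Fin 2) ℝ)
    (hc : c = 1 / 4)
    (hα : α = ![1]) (hβ : β = ![1/2, 1/2])
    (hA0 : A0 = !![1/2]) (hB0 : B0 = !![1/4, 1/4])
    (hA1 : A1 = !![1/2; 1/2]) (hB1 : B1 = !![1/4, 1/4; 1/4, 1/4])
    (hBh : Bh = !![1/4, (3 + 2 * Real.sqrt 3) / 12; (3 - 2 * Real.sqrt 3) / 12, 1/4]) :
    α ⬝ᵥ (1 : Fin 1 → ℝ) = 1 ∧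
    β ⬝ᵥ (1 : Fin 2 → ℝ) = 1 ∧
    β ⬝ᵥ (Bh *ᵥ 1) = 1/2 ∧
    α ⬝ᵥ (A0 *ᵥ 1) = 1/2 ∧
    α ⬝ᵥ (B0 *ᵥ 1) = 1/2 ∧
    α ⬝ᵥ ((B0 *ᵥ 1) * (B0 *ᵥ 1)) = c ∧
    α ⬝ᵥ (B0 *ᵥ (Bh *ᵥ 1)) = 1/4 ∧
    β ⬝ᵥ (A1 *ᵥ 1) = 1/2 ∧
    β ⬝ᵥ ((Bh *ᵥ 1) * (A1 *ᵥ 1)) = 1/4 ∧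
    β ⬝ᵥ (Bh *ᵥ (A1 *ᵥ 1)) = 1/4 ∧
    β ⬝ᵥ (B1 *ᵥ 1) = 1/2 ∧
    β ⬝ᵥ ((B1 *ᵥ 1) * (B1 *ᵥ 1)) = 1/4 ∧
    β ⬝ᵥ (Bh *ᵥ (B1 *ᵥ (Bh *ᵥ 1))) = 1/8 ∧
    β ⬝ᵥ ((Bh *ᵥ 1) * (B1 *ᵥ (Bh *ᵥ 1))) = 1/8 ∧
    β ⬝ᵥ ((Bh *ᵥ 1) * ((B1 *ᵥ 1) * (B1 *ᵥ 1))) = 1/8 ∧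
    β ⬝ᵥ ((B1 *ᵥ 1) * (Bh *ᵥ (B1 *ᵥ 1))) = 1/8 ∧
    β ⬝ᵥ (Bh *ᵥ ((B1 *ᵥ 1) * (B1 *ᵥ 1))) = 1/8 ∧
    β ⬝ᵥ ((B1 *ᵥ 1) * (Bh *ᵥ 1)) = 1/4 ∧
    β ⬝ᵥ (Bh *ᵥ (B1 *ᵥ 1)) = 1/4 ∧
    β ⬝ᵥ (B1 *ᵥ (Bh *ᵥ 1)) = 1/4 ∧
    β ⬝ᵥ ((Bh *ᵥ 1) * (Bh *ᵥ (Bh *ᵥ 1))) = 1/8 ∧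
    β ⬝ᵥ (Bh *ᵥ ((Bh *ᵥ 1) * (Bh *ᵥ 1))) = 1/12 ∧
    β ⬝ᵥ (Bh *ᵥ (Bh *ᵥ (Bh *ᵥ 1))) = 1/24 ∧
    β ⬝ᵥ ((Bh *ᵥ 1) * (Bh *ᵥ 1) * (Bh *ᵥ 1)) = 1/4 ∧
    β ⬝ᵥ ((Bh *ᵥ 1) * (Bh *ᵥ 1)) = 1/3 ∧
    β ⬝ᵥ (Bh *ᵥ (Bh *ᵥ 1)) = 1/6 := by
  subst hc hα hβ hA0 hB0 hA1 hB1 hBh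
  have hs : Real.sqrt 3 * Real.sqrt 3 = 3 := Real.mul_self_sqrt (by norm_num)
  refine ⟨?_,?_,?_,?_,?_,?_,?_,?_,?_,?_,?_,?_,?_,?_,?_,?_,?_,?_,?_,?_,?_,?_,?_,?_,?_,?_⟩ <;>
  (simp [dotProduct, Matrix.mulVec, Fin.sum_univ_succ, Pi.mul_apply] <;>
   ring_nf <;>
   nlinarith [hs, Real.sq_sqrt (by norm_num : (3:ℝ) ≥ 0)])
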